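/- Let A be a bounded nonnegative selfadjoint operator on a Hilbert space X. Then the Moore–Penrose pseudo-inverse of A^{1/2} equals the square root of the Moore–Penrose pseudo-inverse of A, i.e. (A^{1/2})^{[-1]} = (A^{[-1]})^{1/2}; in particular these two (possibly unbounded) operators have the same domain. -/

import Mathlib

open scoped InnerProductSpace

/-- Graph of the Moore–Penrose pseudo-inverse `A^{[-1]}` of a bounded selfadjoint operator `A`
on a Hilbert space `X`: it consists of the pairs `(A x + k, P x)` with `k ∈ ker A` and `P` the
orthogonal projection onto `(ker A)ᗮ = closure (range A)`; equivalently, the pairs `(u, v)` with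
`v ∈ (ker A)ᗮ` and `u - A v ∈ ker A`. -/
noncomputable def mpGraph {X : Type*} [NormedAddCommGroup X] [InnerProductSpace ℂ X]
    [CompleteSpace X] (A : X →L[ℂ] X) : Submodule ℂ (X × X) :=
  (Submodule.comap (LinearMap.snd ℂ X X) (LinearMap.ker (A : X →ₗ[ℂ] X))ᗮ) ⊓
    (Submodule.comap (LinearMap.fst ℂ X X - (A : X →ₗ[ℂ] X).comp (LinearMap.snd ℂ X X))
      (LinearMap.ker (A : X →ₗ[ℂ] X)))

theorem mem_mpGraph {X : Type*} [NormedAddCommGroup X] [InnerProductSpace ℂ X]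
    [CompleteSpace X] (A : X →L[ℂ] X) (p : X × X) :
    p ∈ mpGraph A ↔ p.2 ∈ (LinearMap.ker (A : X →ₗ[ℂ] X))ᗮ ∧ p.1 - A p.2 ∈ LinearMap.ker (A : X →ₗ[ℂ] X) := by
  simp [mpGraph, Submodule.mem_comap]

set_option maxHeartbeats 1000000 in
/-- Let `A` be a bounded nonnegative selfadjoint operator on a Hilbert space
`X`. Then `(A^{1/2})^{[-1]} = (A^{[-1]})^{1/2}`.  Since `(A^{[-1]})^{1/2}` is by definition the
unique nonnegative selfadjoint (possibly unbounded) operator whose square is `A^{[-1]}`, this is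
formalized as: the graph `S` of `(A^{1/2})^{[-1]}` is nonnegative, selfadjoint (its graph equals
the graph of its adjoint), and the composition `S ∘ S` equals the graph of `A^{[-1]}` (in
particular the two operators have the same domain). -/
theorem statement0 {X : Type*} [NormedAddCommGroup X] [InnerProductSpace ℂ X] [CompleteSpace X]
    (A : X →L[ℂ] X) (hA : A.IsPositive) :
    (∀ p ∈ mpGraph (CFC.sqrt A), 0 ≤ (⟪p.2, p.1⟫_ℂ).re) ∧
    ((mpGraph (CFC.sqrt A) : Set (X × X)) =
      {q : X × X | ∀ p ∈ mpGraph (CFC.sqrt A), ⟪p.2, q.1⟫_ℂ = ⟪p.1, q.2⟫_ℂ}) ∧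
    ({pr : X × X | ∃ y : X, (pr.1, y) ∈ mpGraph (CFC.sqrt A) ∧
        (y, pr.2) ∈ mpGraph (CFC.sqrt A)} = (mpGraph A : Set (X × X))) := by
  set B : X →L[ℂ] X := CFC.sqrt A with hBdef
  have hA0 : (0 : X →L[ℂ] X) ≤ A := (ContinuousLinearMap.nonneg_iff_isPositive A).mpr hA
  have hB : B.IsPositive :=
    (ContinuousLinearMap.nonneg_iff_isPositive B).mp (CFC.sqrt_nonneg A)
  have hBsa : IsSelfAdjoint B := hB.isSelfAdjoint
  have hsymm : ∀ x y : X, ⟪B x, y⟫_ℂ = ⟪x, B y⟫_ℂ :=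
    (ContinuousLinearMap.isSelfAdjoint_iff_isSymmetric.mp hBsa)
  have hBB : ∀ x : X, B (B x) = A x := by
    intro x
    have := CFC.sqrt_mul_sqrt_self A hA0
    calc B (B x) = (B * B) x := rfl
    _ = A x := by rw [this]
  -- kernels agree
  have hker : LinearMap.ker (B : X →ₗ[ℂ] X) = LinearMap.ker (A : X →ₗ[ℂ] X) := by
    ext x
    simp only [LinearMap.mem_ker, ContinuousLinearMap.coe_coe]
    constructor
    · intro hx
      rw [← hBB, hx, map_zero]
    · intro hx
      have h0 : ⟪B x, B x⟫_ℂ = 0 := by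
        rw [hsymm, hBB, hx, inner_zero_right]
      exact inner_self_eq_zero.mp h0
  have hrange : ∀ w : X, B w ∈ (LinearMap.ker (B : X →ₗ[ℂ] X))ᗮ := by
    intro w
    rw [Submodule.mem_orthogonal']
    intro u hu
    rw [hsymm]
    simp only [LinearMap.mem_ker, ContinuousLinearMap.coe_coe] at hu
    rw [hu, inner_zero_right]
  clear_value B
  haveI : CompleteSpace (LinearMap.ker (B : X →ₗ[ℂ] X)) :=
    (ContinuousLinearMap.isClosed_ker B).completeSpace_coe
  refine ⟨?_, ?_, ?_⟩
  · -- nonnegativity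
    rintro ⟨u, v⟩ hp
    rw [mem_mpGraph] at hp
    obtain ⟨hv, hk⟩ := hp
    simp only at hv hk ⊢
    have hu : u = B v + (u - B v) := by abel
    rw [hu, inner_add_right]
    have h1 : ⟪v, u - B v⟫_ℂ = 0 := by
      rw [← inner_conj_symm]
      rw [(Submodule.mem_orthogonal _ _).mp hv _ hk]
      simp
    rw [h1, add_zero]
    exact (Complex.nonneg_iff.mp (hB.inner_nonneg_right v)).1
  · -- selfadjointness
    ext ⟨u', v'⟩
    simp only [Set.mem_setOf_eq, SetLike.mem_coe]
    constructor
    · intro hq ⟨u, v⟩ hp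
      rw [mem_mpGraph] at hq hp
      obtain ⟨hv', hk'⟩ := hq
      obtain ⟨hv, hk⟩ := hp
      simp only at hv hk hv' hk' ⊢
      have e1 : ⟪v, u'⟫_ℂ = ⟪v, B v'⟫_ℂ := by
        have : u' = B v' + (u' - B v') := by abel
        rw [this, inner_add_right, ← inner_conj_symm v (u' - B v'),
          (Submodule.mem_orthogonal _ _).mp hv _ hk']
        simp
      have e2 : ⟪u, v'⟫_ℂ = ⟪B v, v'⟫_ℂ := by
        have : u = B v + (u - B v) := by abel
        rw [this, inner_add_left, (Submodule.mem_orthogonal _ _).mp hv' _ hk]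
        simp
      rw [e1, e2, hsymm]
    · intro hq
      rw [mem_mpGraph]
      have hv' : v' ∈ (LinearMap.ker (B : X →ₗ[ℂ] X))ᗮ := by
        rw [Submodule.mem_orthogonal]
        intro k hk
        have := hq (k, 0) (by
          rw [mem_mpGraph]
          exact ⟨Submodule.zero_mem _, by simpa using hk⟩)
        simpa using this.symm
      refine ⟨hv', ?_⟩
      have key : ∀ v ∈ (LinearMap.ker (B : X →ₗ[ℂ] X))ᗮ, ⟪v, u' - B v'⟫_ℂ = 0 := by
        intro v hv
        have := hq (B v, v) (by
          rw [mem_mpGraph]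
          exact ⟨hv, by simp⟩)
        simp only at this
        rw [inner_sub_right, this, ← hsymm, sub_self]
      have : u' - B v' ∈ ((LinearMap.ker (B : X →ₗ[ℂ] X))ᗮ)ᗮ := by
        rw [Submodule.mem_orthogonal]
        intro v hv
        exact key v hv
      rwa [Submodule.orthogonal_orthogonal] at this
  · -- composition
    ext ⟨u, w⟩
    simp only [Set.mem_setOf_eq, SetLike.mem_coe]
    constructor
    · rintro ⟨y, h1, h2⟩
      rw [mem_mpGraph] at h1 h2
      obtain ⟨hy, hk1⟩ := h1
      obtain ⟨hw, hk2⟩ := h2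
      rw [mem_mpGraph]
      simp only at hy hk1 hw hk2 ⊢
      refine ⟨hker ▸ hw, ?_⟩
      have hz : B (y - B w) = 0 := hk2
      have : A w = B y := by
        rw [← hBB]
        have := hz
        rw [map_sub, sub_eq_zero] at this
        exact this.symm
      rw [this, ← hker]
      exact hk1
    · intro h
      rw [mem_mpGraph] at h
      obtain ⟨hw, hk⟩ := h
      simp only at hw hk
      refine ⟨B w, ?_, ?_⟩
      · rw [mem_mpGraph]
        refine ⟨hrange w, ?_⟩
        simp only
        rw [hBB, hker]
        exact hk
      · rw [mem_mpGraph]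
        exact ⟨hker ▸ hw, by simp⟩
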